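/- arXiv:1809.05442 — 3 statements merged into one kernel-verified Lean document; each statement's English description precedes it below -/
import Mathlib

section
/- Lemma 4, bound on A_i: Under the segregation and saturation constraints, for i = 1,2: if nᵢ > ñᵢ then q̃ᵢ = 0, hence qᵢ ≥ q̃ᵢ; symmetrically if ñᵢ > nᵢ then q̃ᵢ ≥ qᵢ. Consequently (nᵢ − ñᵢ)(qᵢ − q̃ᵢ) ≥ 0, and whenever nᵢ ≠ ñᵢ the quotient Aᵢ := (nᵢ − ñᵢ)/((nᵢ − ñᵢ) + (qᵢ − q̃ᵢ)) is well defined and satisfies 0 ≤ Aᵢ ≤ 1. -/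
lemma aux_one (n p tn tp : ℝ) (hn : 0 ≤ n) (hp : 0 ≤ p) (htn : 0 ≤ tn) (htp : 0 ≤ tp)
    (h1 : tn < n → tn * tp = 0) (h2 : n < tn → n * p = 0) :
    ((tn < n → tn * tp = 0 ∧ tn * tp ≤ n * p) ∧
     (n < tn → n * p ≤ tn * tp) ∧
     0 ≤ (n - tn) * (n * p - tn * tp) ∧
     (n ≠ tn →
       (n - tn) + (n * p - tn * tp) ≠ 0 ∧
       0 ≤ (n - tn) / ((n - tn) + (n * p - tn * tp)) ∧
       (n - tn) / ((n - tn) + (n * p - tn * tp)) ≤ 1)) := by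
  have hq : 0 ≤ n * p := mul_nonneg hn hp
  have htq : 0 ≤ tn * tp := mul_nonneg htn htp
  refine ⟨fun h => ⟨h1 h, by rw [h1 h]; exact hq⟩, fun h => by rw [h2 h]; exact htq, ?_, ?_⟩
  · rcases lt_trichotomy tn n with h | h | h
    · have := h1 h
      apply mul_nonneg (by linarith) (by linarith)
    · simp [h]
    · have := h2 h
      nlinarith
  · intro hne
    rcases lt_or_gt_of_ne hne with h | h
    · -- n < tn, so n*p = 0, d < 0, e ≤ 0
      have he := h2 h
      have hd : (n - tn) + (n * p - tn * tp) < 0 := by nlinarith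
      refine ⟨ne_of_lt hd, ?_, ?_⟩
      · exact div_nonneg_of_nonpos (by linarith) (le_of_lt hd)
      · rw [div_le_one_of_neg hd]; linarith
    · have he := h1 h
      have hd : 0 < (n - tn) + (n * p - tn * tp) := by nlinarith
      refine ⟨ne_of_gt hd, div_nonneg (by linarith) (le_of_lt hd), ?_⟩
      rw [div_le_one hd]; nlinarith


/-- **Lemma 4, bound on `Aᵢ`.** Under the segregation and saturation constraints, for
`i = 1,2`: if `nᵢ > ñᵢ` then `q̃ᵢ = 0`, hence `qᵢ ≥ q̃ᵢ`; symmetrically if `ñᵢ > nᵢ` then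
`q̃ᵢ ≥ qᵢ`.  Consequently `(nᵢ − ñᵢ)(qᵢ − q̃ᵢ) ≥ 0`, and whenever `nᵢ ≠ ñᵢ` the quotient
`Aᵢ := (nᵢ − ñᵢ)/((nᵢ − ñᵢ) + (qᵢ − q̃ᵢ))` is well defined and satisfies `0 ≤ Aᵢ ≤ 1`.
Here `qᵢ := nᵢ p` and `q̃ᵢ := ñᵢ p̃`, tilde quantities being written `tn₁, tn₂, tp`. -/
theorem lemma4_bound_A
    (n₁ n₂ p tn₁ tn₂ tp : ℝ)
    (hn₁ : n₁ ∈ Set.Icc (0:ℝ) 1) (hn₂ : n₂ ∈ Set.Icc (0:ℝ) 1)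
    (htn₁ : tn₁ ∈ Set.Icc (0:ℝ) 1) (htn₂ : tn₂ ∈ Set.Icc (0:ℝ) 1)
    (hp : 0 ≤ p) (htp : 0 ≤ tp)
    (hseg : n₁ * n₂ = 0) (htseg : tn₁ * tn₂ = 0)
    (hsat : (1 - (n₁ + n₂)) * p = 0) (htsat : (1 - (tn₁ + tn₂)) * tp = 0) :
    ((tn₁ < n₁ → tn₁ * tp = 0 ∧ tn₁ * tp ≤ n₁ * p) ∧
     (n₁ < tn₁ → n₁ * p ≤ tn₁ * tp) ∧
     0 ≤ (n₁ - tn₁) * (n₁ * p - tn₁ * tp) ∧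
     (n₁ ≠ tn₁ →
       (n₁ - tn₁) + (n₁ * p - tn₁ * tp) ≠ 0 ∧
       0 ≤ (n₁ - tn₁) / ((n₁ - tn₁) + (n₁ * p - tn₁ * tp)) ∧
       (n₁ - tn₁) / ((n₁ - tn₁) + (n₁ * p - tn₁ * tp)) ≤ 1)) ∧
    ((tn₂ < n₂ → tn₂ * tp = 0 ∧ tn₂ * tp ≤ n₂ * p) ∧
     (n₂ < tn₂ → n₂ * p ≤ tn₂ * tp) ∧
     0 ≤ (n₂ - tn₂) * (n₂ * p - tn₂ * tp) ∧
     (n₂ ≠ tn₂ →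
       (n₂ - tn₂) + (n₂ * p - tn₂ * tp) ≠ 0 ∧
       0 ≤ (n₂ - tn₂) / ((n₂ - tn₂) + (n₂ * p - tn₂ * tp)) ∧
       (n₂ - tn₂) / ((n₂ - tn₂) + (n₂ * p - tn₂ * tp)) ≤ 1)) := by
  obtain ⟨hn₁0, hn₁1⟩ := hn₁
  obtain ⟨hn₂0, hn₂1⟩ := hn₂
  obtain ⟨htn₁0, htn₁1⟩ := htn₁
  obtain ⟨htn₂0, htn₂1⟩ := htn₂
  have key : ∀ a b q c d tq : ℝ, 0 ≤ a → 0 ≤ b → a ≤ 1 → c * d = 0 →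
      (1 - (c + d)) * tq = 0 → c < a → c * tq = 0 := by
    intro a b q c d tq _ _ ha1 hcd hst hlt
    rcases eq_or_lt_of_le (le_of_lt (lt_of_lt_of_le hlt ha1) : c ≤ 1) with h | h
    · nlinarith
    rcases mul_eq_zero.mp hcd with h0 | h0
    · rw [h0, zero_mul]
    · rw [h0] at hst
      have : tq = 0 := by
        rcases mul_eq_zero.mp hst with h2 | h2
        · exfalso; linarith
        · exact h2
      rw [this, mul_zero]
  constructor
  · exact aux_one n₁ p tn₁ tp hn₁0 hp htn₁0 htp
      (fun h => key n₁ 1 p tn₁ tn₂ tp hn₁0 zero_le_one hn₁1 htseg htsat h)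
      (fun h => key tn₁ 1 tp n₁ n₂ p htn₁0 zero_le_one htn₁1 hseg hsat h)
  · exact aux_one n₂ p tn₂ tp hn₂0 hp htn₂0 htp
      (fun h => key n₂ 1 p tn₂ tn₁ tp hn₂0 zero_le_one hn₂1 (by linarith [htseg]; ) (by linarith [htsat]) h)
      (fun h => key tn₂ 1 tp n₂ n₁ p htn₂0 zero_le_one htn₂1 (by linarith [hseg]) (by linarith [hsat]) h)
end

section
/- Lemma 4, bound on B_i: Under the segregation and saturation constraints, for i = 1,2: if qᵢ > q̃ᵢ then nᵢ = 1 (in particular nᵢ ≥ ñᵢ); symmetrically if q̃ᵢ > qᵢ then ñᵢ = 1 ≥ nᵢ. Consequently (nᵢ − ñᵢ)(qᵢ − q̃ᵢ) ≥ 0, and whenever qᵢ ≠ q̃ᵢ the quotient Bᵢ := (qᵢ − q̃ᵢ)/((nᵢ − ñᵢ) + (qᵢ − q̃ᵢ)) is well defined and satisfies 0 ≤ Bᵢ ≤ 1. -/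
lemma key_pos (n₁ n₂ p : ℝ) (hn₂ : n₂ ∈ Set.Icc (0:ℝ) 1)
    (hseg : n₁ * n₂ = 0) (hsat : (1 - (n₁ + n₂)) * p = 0)
    (h : 0 < n₁ * p) : n₁ = 1 := by
  have hn : n₁ ≠ 0 := by rintro rfl; simp at h
  have hp : p ≠ 0 := by rintro rfl; simp at h
  have h2 : n₂ = 0 := by rcases mul_eq_zero.1 hseg with h | h; exact absurd h hn; exact h
  have := mul_eq_zero.1 hsat
  rcases this with h | h
  · subst h2; linarith [h]
  · exact absurd h hp

lemma aux1 (n₁ n₂ p tn₁ tn₂ tp : ℝ)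
    (hn₁ : n₁ ∈ Set.Icc (0:ℝ) 1) (hn₂ : n₂ ∈ Set.Icc (0:ℝ) 1)
    (htn₁ : tn₁ ∈ Set.Icc (0:ℝ) 1) (htn₂ : tn₂ ∈ Set.Icc (0:ℝ) 1)
    (hp : 0 ≤ p) (htp : 0 ≤ tp)
    (hseg : n₁ * n₂ = 0) (htseg : tn₁ * tn₂ = 0)
    (hsat : (1 - (n₁ + n₂)) * p = 0) (htsat : (1 - (tn₁ + tn₂)) * tp = 0) :
    ((tn₁ * tp < n₁ * p → n₁ = 1 ∧ tn₁ ≤ n₁) ∧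
     (n₁ * p < tn₁ * tp → tn₁ = 1 ∧ n₁ ≤ tn₁) ∧
     0 ≤ (n₁ - tn₁) * (n₁ * p - tn₁ * tp) ∧
     (n₁ * p ≠ tn₁ * tp →
       (n₁ - tn₁) + (n₁ * p - tn₁ * tp) ≠ 0 ∧
       0 ≤ (n₁ * p - tn₁ * tp) / ((n₁ - tn₁) + (n₁ * p - tn₁ * tp)) ∧
       (n₁ * p - tn₁ * tp) / ((n₁ - tn₁) + (n₁ * p - tn₁ * tp)) ≤ 1)) := by
  obtain ⟨hn₁0, hn₁1⟩ := hn₁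
  obtain ⟨htn₁0, htn₁1⟩ := htn₁
  have H1 : tn₁ * tp < n₁ * p → n₁ = 1 ∧ tn₁ ≤ n₁ := by
    intro h
    have hpos : 0 < n₁ * p := lt_of_le_of_lt (mul_nonneg htn₁0 htp) h
    have := key_pos n₁ n₂ p hn₂ hseg hsat hpos
    exact ⟨this, by linarith⟩
  have H2 : n₁ * p < tn₁ * tp → tn₁ = 1 ∧ n₁ ≤ tn₁ := by
    intro h
    have hpos : 0 < tn₁ * tp := lt_of_le_of_lt (mul_nonneg hn₁0 hp) h
    have := key_pos tn₁ tn₂ tp htn₂ htseg htsat hpos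
    exact ⟨this, by linarith⟩
  refine ⟨H1, H2, ?_, ?_⟩
  · rcases lt_trichotomy (n₁ * p) (tn₁ * tp) with h | h | h
    · obtain ⟨_, h2⟩ := H2 h
      have := mul_nonneg (by linarith : (0:ℝ) ≤ tn₁ - n₁) (by linarith : (0:ℝ) ≤ tn₁ * tp - n₁ * p)
      nlinarith
    · simp [h]
    · obtain ⟨_, h2⟩ := H1 h
      exact mul_nonneg (by linarith) (by linarith)
  · intro hne
    rcases hne.lt_or_gt with h | h
    · obtain ⟨_, h2⟩ := H2 h
      have hd : (n₁ - tn₁) + (n₁ * p - tn₁ * tp) < 0 := by linarith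
      refine ⟨ne_of_lt hd, ?_, ?_⟩
      · have hnum : n₁ * p - tn₁ * tp ≤ 0 := by linarith
        exact div_nonneg_of_nonpos hnum (le_of_lt hd)
      · rw [div_le_one_of_neg hd]; linarith
    · obtain ⟨_, h2⟩ := H1 h
      have hd : 0 < (n₁ - tn₁) + (n₁ * p - tn₁ * tp) := by linarith
      refine ⟨ne_of_gt hd, div_nonneg (by linarith) (le_of_lt hd), ?_⟩
      rw [div_le_one hd]; linarith


/-- **Lemma 4, bound on `Bᵢ`.** Under the segregation and saturation constraints, for
`i = 1,2`: if `qᵢ > q̃ᵢ` then `nᵢ = 1` (in particular `nᵢ ≥ ñᵢ`); symmetrically if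
`q̃ᵢ > qᵢ` then `ñᵢ = 1 ≥ nᵢ`.  Consequently `(nᵢ − ñᵢ)(qᵢ − q̃ᵢ) ≥ 0`, and whenever
`qᵢ ≠ q̃ᵢ` the quotient `Bᵢ := (qᵢ − q̃ᵢ)/((nᵢ − ñᵢ) + (qᵢ − q̃ᵢ))` is well defined and
satisfies `0 ≤ Bᵢ ≤ 1`.  Here `qᵢ := nᵢ p` and `q̃ᵢ := ñᵢ p̃`, tilde quantities being
written `tn₁, tn₂, tp`. -/
theorem lemma4_bound_B
    (n₁ n₂ p tn₁ tn₂ tp : ℝ)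
    (hn₁ : n₁ ∈ Set.Icc (0:ℝ) 1) (hn₂ : n₂ ∈ Set.Icc (0:ℝ) 1)
    (htn₁ : tn₁ ∈ Set.Icc (0:ℝ) 1) (htn₂ : tn₂ ∈ Set.Icc (0:ℝ) 1)
    (hp : 0 ≤ p) (htp : 0 ≤ tp)
    (hseg : n₁ * n₂ = 0) (htseg : tn₁ * tn₂ = 0)
    (hsat : (1 - (n₁ + n₂)) * p = 0) (htsat : (1 - (tn₁ + tn₂)) * tp = 0) :
    ((tn₁ * tp < n₁ * p → n₁ = 1 ∧ tn₁ ≤ n₁) ∧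
     (n₁ * p < tn₁ * tp → tn₁ = 1 ∧ n₁ ≤ tn₁) ∧
     0 ≤ (n₁ - tn₁) * (n₁ * p - tn₁ * tp) ∧
     (n₁ * p ≠ tn₁ * tp →
       (n₁ - tn₁) + (n₁ * p - tn₁ * tp) ≠ 0 ∧
       0 ≤ (n₁ * p - tn₁ * tp) / ((n₁ - tn₁) + (n₁ * p - tn₁ * tp)) ∧
       (n₁ * p - tn₁ * tp) / ((n₁ - tn₁) + (n₁ * p - tn₁ * tp)) ≤ 1)) ∧
    ((tn₂ * tp < n₂ * p → n₂ = 1 ∧ tn₂ ≤ n₂) ∧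
     (n₂ * p < tn₂ * tp → tn₂ = 1 ∧ n₂ ≤ tn₂) ∧
     0 ≤ (n₂ - tn₂) * (n₂ * p - tn₂ * tp) ∧
     (n₂ * p ≠ tn₂ * tp →
       (n₂ - tn₂) + (n₂ * p - tn₂ * tp) ≠ 0 ∧
       0 ≤ (n₂ * p - tn₂ * tp) / ((n₂ - tn₂) + (n₂ * p - tn₂ * tp)) ∧
       (n₂ * p - tn₂ * tp) / ((n₂ - tn₂) + (n₂ * p - tn₂ * tp)) ≤ 1)) := by
  exact ⟨aux1 n₁ n₂ p tn₁ tn₂ tp hn₁ hn₂ htn₁ htn₂ hp htp hseg htseg hsat htsat,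
    aux1 n₂ n₁ p tn₂ tn₁ tp hn₂ hn₁ htn₂ htn₁ hp htp (by linarith [mul_comm n₁ n₂])
      (by linarith [mul_comm tn₁ tn₂]) (by linarith [hsat]) (by linarith [htsat])⟩
end

section
/- Sign of the interface velocity for the tumour spheroid (Section 4.3): Let g₁, g₂ > 0, L > 0 and 0 < R₁ < L. Define λ := √g₁ · cosh(√g₂ (R₁ − L)) · sinh(√g₁ R₁) − √g₂ · sinh(√g₂ (R₁ − L)) · cosh(√g₁ R₁). Then λ > 0, and for any real homeostatic pressures P_M¹, P_M², the interface velocity R₁' := −√(g₁ g₂) (P_M¹ − P_M²) · sinh(√g₂ (R₁ − L)) · cosh(√g₁ R₁) / λ has the same sign as P_M¹ − P_M²: R₁' > 0 if P_M¹ > P_M², R₁' = 0 if P_M¹ = P_M², and R₁' < 0 if P_M¹ < P_M². -/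
/-- The denominator `λ` appearing in the tumour-spheroid interface velocity. -/
noncomputable def spheroidLambda (g₁ g₂ L R₁ : ℝ) : ℝ :=
  Real.sqrt g₁ * Real.cosh (Real.sqrt g₂ * (R₁ - L)) * Real.sinh (Real.sqrt g₁ * R₁)
    - Real.sqrt g₂ * Real.sinh (Real.sqrt g₂ * (R₁ - L)) * Real.cosh (Real.sqrt g₁ * R₁)

/-- The tumour-spheroid interface velocity `R₁' = −√(g₁g₂)(P_M¹−P_M²) sinh(√g₂(R₁−L)) cosh(√g₁R₁)/λ`. -/
noncomputable def spheroidVelocity (g₁ g₂ L R₁ PM₁ PM₂ : ℝ) : ℝ :=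
  -Real.sqrt (g₁ * g₂) * (PM₁ - PM₂) * Real.sinh (Real.sqrt g₂ * (R₁ - L))
    * Real.cosh (Real.sqrt g₁ * R₁) / spheroidLambda g₁ g₂ L R₁

/-- **Sign of the interface velocity for the tumour spheroid (Section 4.3).**
For `g₁, g₂ > 0`, `0 < R₁ < L`, the denominator `λ` is positive, and the interface velocity
`R₁'` has the same sign as `P_M¹ − P_M²`. -/
theorem interface_velocity_sign
    (g₁ g₂ L R₁ PM₁ PM₂ : ℝ)
    (hg₁ : 0 < g₁) (hg₂ : 0 < g₂) (hR₁ : 0 < R₁) (hRL : R₁ < L) :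
    0 < spheroidLambda g₁ g₂ L R₁ ∧
    (PM₂ < PM₁ → 0 < spheroidVelocity g₁ g₂ L R₁ PM₁ PM₂) ∧
    (PM₁ = PM₂ → spheroidVelocity g₁ g₂ L R₁ PM₁ PM₂ = 0) ∧
    (PM₁ < PM₂ → spheroidVelocity g₁ g₂ L R₁ PM₁ PM₂ < 0) := by
  have ha : 0 < Real.sqrt g₁ := Real.sqrt_pos.mpr hg₁
  have hb : 0 < Real.sqrt g₂ := Real.sqrt_pos.mpr hg₂
  have hs1 : 0 < Real.sinh (Real.sqrt g₁ * R₁) := Real.sinh_pos_iff.mpr (by positivity)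
  have hs2 : Real.sinh (Real.sqrt g₂ * (R₁ - L)) < 0 := by
    have : Real.sqrt g₂ * (R₁ - L) < 0 := mul_neg_of_pos_of_neg hb (by linarith)
    simpa using Real.sinh_neg_iff.mpr this
  have hc1 : 0 < Real.cosh (Real.sqrt g₁ * R₁) := Real.cosh_pos _
  have hc2 : 0 < Real.cosh (Real.sqrt g₂ * (R₁ - L)) := Real.cosh_pos _
  have hlam : 0 < spheroidLambda g₁ g₂ L R₁ := by
    unfold spheroidLambda
    nlinarith [mul_pos hb (mul_pos (neg_pos.mpr hs2) hc1),
      mul_pos ha (mul_pos hc2 hs1)]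
  have hg : 0 < Real.sqrt (g₁ * g₂) := Real.sqrt_pos.mpr (mul_pos hg₁ hg₂)
  have key : ∀ P Q : ℝ, spheroidVelocity g₁ g₂ L R₁ P Q =
      (P - Q) * (Real.sqrt (g₁ * g₂) * (-Real.sinh (Real.sqrt g₂ * (R₁ - L)))
        * Real.cosh (Real.sqrt g₁ * R₁) / spheroidLambda g₁ g₂ L R₁) := by
    intro P Q; unfold spheroidVelocity; ring
  have hpos : 0 < Real.sqrt (g₁ * g₂) * (-Real.sinh (Real.sqrt g₂ * (R₁ - L)))
        * Real.cosh (Real.sqrt g₁ * R₁) / spheroidLambda g₁ g₂ L R₁ := by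
    apply div_pos _ hlam
    exact mul_pos (mul_pos hg (neg_pos.mpr hs2)) hc1
  refine ⟨hlam, ?_, ?_, ?_⟩
  · intro h; rw [key]; exact mul_pos (by linarith) hpos
  · intro h; rw [key, h]; ring
  · intro h; rw [key]; exact mul_neg_of_neg_of_pos (by linarith) hpos
end
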